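/- Let G be a finite connected graph, ℓ ≥ 0, q ∈ (0,1), and f : G × G → ℝ≥0. Suppose f(·,y) is (ℓ,q)-subharmonic in x on the ball B_{r'}(u') for every fixed y, and f(x,·) is (ℓ,q)-subharmonic in y on the ball B_{r''}(u'') for every fixed x, where r', r'' ≥ ℓ and d(u',u'') ≥ r' + r'' + 2. Then f(u',u'') ≤ q^(⌊(r'+1)/(ℓ+1)⌋ + ⌊(r''+1)/(ℓ+1)⌋) · max_{(x,y) ∈ G×G} f(x,y). -/
import Mathlib


/-- two-variable subharmonicity bound on a finite connected graph. -/
theorem stmt_1 {V : Type*} [Fintype V] (G : SimpleGraph V) (hG : G.Connected)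
    (ℓ r' r'' : ℕ) (hr' : ℓ ≤ r') (hr'' : ℓ ≤ r'')
    (q : ℝ) (hq0 : 0 < q) (hq1 : q < 1)
    (f : V → V → ℝ) (hf : ∀ v w, 0 ≤ f v w) (u' u'' : V)
    (hdist : r' + r'' + 2 ≤ G.dist u' u'')
    (hsub1 : ∀ y : V, ∀ x : V,
      ({z : V | G.dist x z ≤ ℓ} ⊆ {z : V | G.dist u' z ≤ r'}) →
      f x y ≤ q * ⨆ z : {z : V // G.dist x z ≤ ℓ + 1}, f z.1 y)
    (hsub2 : ∀ x : V, ∀ y : V,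
      ({z : V | G.dist y z ≤ ℓ} ⊆ {z : V | G.dist u'' z ≤ r''}) →
      f x y ≤ q * ⨆ z : {z : V // G.dist y z ≤ ℓ + 1}, f x z.1) :
    f u' u'' ≤ q ^ ((r' + 1) / (ℓ + 1) + (r'' + 1) / (ℓ + 1)) *
      ⨆ p : V × V, f p.1 p.2 := by
  set M := ⨆ p : V × V, f p.1 p.2 with hM
  have hMb : ∀ x y, f x y ≤ M := fun x y =>
    le_ciSup (f := fun p : V × V => f p.1 p.2) (Set.finite_range _).bddAbove (x, y)
  have hM0 : 0 ≤ M := le_trans (hf u' u'') (hMb u' u'')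
  have tri : ∀ a b c : V, G.dist a c ≤ G.dist a b + G.dist b c := fun a b c =>
    hG.dist_triangle
  -- Lemma B: iterate subharmonicity in the second variable
  have lemB : ∀ k : ℕ, ∀ x y : V, G.dist u'' y + k * (ℓ + 1) ≤ r'' + 1 →
      f x y ≤ q ^ k * M := by
    intro k
    induction k with
    | zero => intro x y _; simpa using hMb x y
    | succ k ih =>
      intro x y hy
      rw [Nat.succ_mul] at hy
      have hyl : G.dist u'' y + ℓ ≤ r'' := by omega
      have hsubset : {z : V | G.dist y z ≤ ℓ} ⊆ {z : V | G.dist u'' z ≤ r''} := by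
        intro z hz
        simp only [Set.mem_setOf_eq] at hz ⊢
        calc G.dist u'' z ≤ G.dist u'' y + G.dist y z := tri _ _ _
          _ ≤ r'' := by omega
      haveI : Nonempty {z : V // G.dist y z ≤ ℓ + 1} :=
        ⟨⟨y, by simp [SimpleGraph.dist_self]⟩⟩
      have hstep := hsub2 x y hsubset
      have hsup : (⨆ z : {z : V // G.dist y z ≤ ℓ + 1}, f x z.1) ≤ q ^ k * M := by
        apply ciSup_le
        intro z
        apply ih x z.1
        have hz := z.2
        have : G.dist u'' z.1 ≤ G.dist u'' y + G.dist y z.1 := tri _ _ _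
        omega
      calc f x y ≤ q * (q ^ k * M) :=
            le_trans hstep (mul_le_mul_of_nonneg_left hsup hq0.le)
        _ = q ^ (k + 1) * M := by ring
  set C := q ^ ((r'' + 1) / (ℓ + 1)) * M with hC
  have hC0 : 0 ≤ C := mul_nonneg (pow_nonneg hq0.le _) hM0
  have hCb : ∀ x : V, f x u'' ≤ C := by
    intro x
    apply lemB
    simp only [SimpleGraph.dist_self, zero_add]
    exact Nat.div_mul_le_self (r'' + 1) (ℓ + 1)
  -- Lemma A: iterate subharmonicity in the first variable
  have lemA : ∀ k : ℕ, ∀ x : V, G.dist u' x + k * (ℓ + 1) ≤ r' + 1 →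
      f x u'' ≤ q ^ k * C := by
    intro k
    induction k with
    | zero => intro x _; simpa using hCb x
    | succ k ih =>
      intro x hx
      rw [Nat.succ_mul] at hx
      have hxl : G.dist u' x + ℓ ≤ r' := by omega
      have hsubset : {z : V | G.dist x z ≤ ℓ} ⊆ {z : V | G.dist u' z ≤ r'} := by
        intro z hz
        simp only [Set.mem_setOf_eq] at hz ⊢
        calc G.dist u' z ≤ G.dist u' x + G.dist x z := tri _ _ _
          _ ≤ r' := by omega
      haveI : Nonempty {z : V // G.dist x z ≤ ℓ + 1} :=
        ⟨⟨x, by simp [SimpleGraph.dist_self]⟩⟩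
      have hstep := hsub1 u'' x hsubset
      have hsup : (⨆ z : {z : V // G.dist x z ≤ ℓ + 1}, f z.1 u'') ≤ q ^ k * C := by
        apply ciSup_le
        intro z
        apply ih z.1
        have hz := z.2
        have : G.dist u' z.1 ≤ G.dist u' x + G.dist x z.1 := tri _ _ _
        omega
      calc f x u'' ≤ q * (q ^ k * C) :=
            le_trans hstep (mul_le_mul_of_nonneg_left hsup hq0.le)
        _ = q ^ (k + 1) * C := by ring
  have := lemA ((r' + 1) / (ℓ + 1)) u' (by
    simp only [SimpleGraph.dist_self, zero_add]
    exact Nat.div_mul_le_self (r' + 1) (ℓ + 1))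
  calc f u' u'' ≤ q ^ ((r' + 1) / (ℓ + 1)) * C := this
    _ = q ^ ((r' + 1) / (ℓ + 1) + (r'' + 1) / (ℓ + 1)) * M := by
        rw [hC, pow_add]; ring
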